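/- Let v^0 = v̲·1 with v̲ > 0, let α > 0, β ≥ 0, and let {r^t} ⊂ ℝⁿ. Define v^{t+1} = √(v^0 ⊙ v^0 + Σ_{i=0}^t (α‖r^i‖² · 1 + β r^i ⊙ r^i)) (componentwise square root and product). Then for all t ≥ 0: √(v̲² + α R_t) ≤ v^{t+1}_j ≤ √(v̲² + (α+β) R_t) for every coordinate j, where R_t = Σ_{i=0}^t ‖r^i‖²; consequently max_j v^{t+1}_j / min_j v^{t+1}_j ≤ 1 + √(β/α). -/

import Mathlib

theorem stepsize_vector_bounds {n : ℕ} (hn : 0 < n)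
    (vb α β : ℝ) (hvb : 0 < vb) (hα : 0 < α) (hβ : 0 ≤ β)
    (r : ℕ → Fin n → ℝ) (v : ℕ → Fin n → ℝ)
    (hv0 : ∀ j, v 0 j = vb)
    (hv : ∀ t j, v (t + 1) j
      = Real.sqrt (vb^2 + ∑ i ∈ Finset.range (t + 1),
          (α * (∑ k, (r i k)^2) + β * (r i j)^2))) :
    ∀ t,
      (∀ j, Real.sqrt (vb^2 + α * ∑ i ∈ Finset.range (t + 1), ∑ k, (r i k)^2)
              ≤ v (t + 1) j
            ∧ v (t + 1) j
              ≤ Real.sqrt (vb^2 + (α + β) * ∑ i ∈ Finset.range (t + 1), ∑ k, (r i k)^2))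
      ∧ (∀ j j', v (t + 1) j / v (t + 1) j' ≤ 1 + Real.sqrt (β / α)) := by
  intro t
  set R : ℝ := ∑ i ∈ Finset.range (t + 1), ∑ k, (r i k)^2 with hR
  have hRnn : 0 ≤ R := by
    apply Finset.sum_nonneg; intro i _
    apply Finset.sum_nonneg; intro k _; positivity
  have hlow : ∀ j, Real.sqrt (vb^2 + α * R) ≤ v (t + 1) j := by
    intro j
    rw [hv t j]
    apply Real.sqrt_le_sqrt
    rw [Finset.mul_sum]
    apply add_le_add_right
    apply Finset.sum_le_sum
    intro i _
    nlinarith [sq_nonneg (r i j)]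
  have hhigh : ∀ j, v (t + 1) j ≤ Real.sqrt (vb^2 + (α + β) * R) := by
    intro j
    rw [hv t j]
    apply Real.sqrt_le_sqrt
    rw [Finset.mul_sum]
    apply add_le_add_right
    apply Finset.sum_le_sum
    intro i _
    have hle : (r i j)^2 ≤ ∑ k, (r i k)^2 := by
      apply Finset.single_le_sum (fun k _ => sq_nonneg (r i k)) (Finset.mem_univ j)
    nlinarith
  refine ⟨fun j => ⟨hlow j, hhigh j⟩, fun j j' => ?_⟩
  have hBpos : 0 < vb^2 + α * R := by positivity
  have hsBpos : 0 < Real.sqrt (vb^2 + α * R) := Real.sqrt_pos.mpr hBpos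
  have h1 : v (t + 1) j / v (t + 1) j'
      ≤ Real.sqrt (vb^2 + (α + β) * R) / Real.sqrt (vb^2 + α * R) := by
    apply div_le_div₀ (Real.sqrt_nonneg _) (hhigh j) hsBpos (hlow j')
  refine h1.trans ?_
  rw [div_le_iff₀ hsBpos]
  have key : vb^2 + (α + β) * R ≤ ((1 + Real.sqrt (β / α))^2) * (vb^2 + α * R) := by
    have hs : Real.sqrt (β / α) ^ 2 = β / α := Real.sq_sqrt (by positivity)
    have hsn : 0 ≤ Real.sqrt (β / α) := Real.sqrt_nonneg _
    have hβα : (β / α) * α = β := div_mul_cancel₀ β (ne_of_gt hα)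
    nlinarith [sq_nonneg vb, mul_nonneg hsn hRnn, mul_nonneg hsn (sq_nonneg vb),
      mul_nonneg (mul_nonneg hsn hsn) hRnn]
  calc Real.sqrt (vb^2 + (α + β) * R)
      ≤ Real.sqrt (((1 + Real.sqrt (β / α))^2) * (vb^2 + α * R)) := Real.sqrt_le_sqrt key
    _ = (1 + Real.sqrt (β / α)) * Real.sqrt (vb^2 + α * R) := by
        rw [Real.sqrt_mul (by positivity), Real.sqrt_sq (by positivity)]
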